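/- Let φ_{n+1}(ξ) = ∫_{-1}^ξ w(t) L_n(t) dt (n ≥ 1) with w = 1/β̂, β̂ piecewise constant and positive on [-1,1] with a single interior discontinuity. Then φ_{n+1} changes sign exactly n-1 times in the open interval (-1,1). -/

import Mathlib

set_option maxRecDepth 10000


open MeasureTheory intervalIntegral Polynomial Set

/-- The piecewise constant coefficient on the reference interval. -/
noncomputable def betaHat (α βm βp : ℝ) (ξ : ℝ) : ℝ := if ξ ≤ α then βm else βp

/-- Generalized Lobatto polynomial `φ_{n+1}` obtained by integrating `w · L_n`. -/
noncomputable def phiGen' (α βm βp : ℝ) (L : ℕ → Polynomial ℝ) (n : ℕ) (ξ : ℝ) : ℝ :=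
  ∫ t in (-1 : ℝ)..ξ, (betaHat α βm βp t)⁻¹ * (L n).eval t

section Aux

variable {α βm βp : ℝ} (hβm : 0 < βm) (hβp : 0 < βp)

lemma w_meas : Measurable (fun t => (betaHat α βm βp t)⁻¹) := by
  unfold betaHat
  exact (Measurable.ite measurableSet_Iic measurable_const measurable_const).inv

include hβm hβp in
lemma w_pos (t : ℝ) : 0 < (betaHat α βm βp t)⁻¹ := by
  unfold betaHat; split <;> positivity

include hβm hβp in
lemma w_bdd (t : ℝ) : ‖(betaHat α βm βp t)⁻¹‖ ≤ max βm⁻¹ βp⁻¹ := by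
  unfold betaHat
  rw [Real.norm_eq_abs]
  split
  · rw [abs_of_pos (by positivity)]; exact le_max_left _ _
  · rw [abs_of_pos (by positivity)]; exact le_max_right _ _

include hβm hβp in
lemma intInt {g : ℝ → ℝ} (hg : Continuous g) (a b : ℝ) :
    IntervalIntegrable (fun t => (betaHat α βm βp t)⁻¹ * g t) volume a b := by
  rw [intervalIntegrable_iff]
  exact Integrable.bdd_mul (hg.integrableOn_uIoc)
    ((w_meas).aestronglyMeasurable.restrict) (ae_of_all _ fun t => w_bdd hβm hβp t)

include hβm hβp in
lemma phi_cont (L : ℕ → Polynomial ℝ) (n : ℕ) : Continuous (phiGen' α βm βp L n) := by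
  unfold phiGen'
  exact intervalIntegral.continuous_primitive
    (fun a b => intInt hβm hβp ((L n).continuous) a b) _

end Aux

section Aux2

variable {α βm βp : ℝ} (hβm : 0 < βm) (hβp : 0 < βp) (L : ℕ → Polynomial ℝ) (n : ℕ)

include hβm hβp in
/-- Between two points with equal φ-values there is a root of `L n`. -/
lemma gap_root {a b : ℝ} (hab : a < b)
    (h : phiGen' α βm βp L n a = phiGen' α βm βp L n b) :
    ∃ c ∈ Set.Ioo a b, (L n).eval c = 0 := by
  by_contra hno
  push_neg at hno
  -- L n has constant sign on Ioo a b
  have hsign : (∀ x ∈ Set.Ioo a b, 0 < (L n).eval x) ∨ (∀ x ∈ Set.Ioo a b, (L n).eval x < 0) := by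
    by_contra hcon
    push_neg at hcon
    obtain ⟨⟨x, hx, hx0⟩, ⟨y, hy, hy0⟩⟩ := hcon
    have hx0' : (L n).eval x < 0 := lt_of_le_of_ne hx0 (hno x hx)
    have hy0' : 0 < (L n).eval y := lt_of_le_of_ne hy0 (Ne.symm (hno y hy))
    have : (0:ℝ) ∈ Set.uIcc ((L n).eval x) ((L n).eval y) :=
      Set.mem_uIcc.mpr (Or.inl ⟨hx0'.le, hy0'.le⟩)
    obtain ⟨c, hc, hc0⟩ := intermediate_value_uIcc (a := x) (b := y)
      ((L n).continuous.continuousOn) this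
    have : c ∈ Set.Ioo a b := by
      rcases Set.mem_uIcc.mp hc with ⟨h1, h2⟩ | ⟨h1, h2⟩
      · exact ⟨lt_of_lt_of_le hx.1 h1, lt_of_le_of_lt h2 hy.2⟩
      · exact ⟨lt_of_lt_of_le hy.1 h1, lt_of_le_of_lt h2 hx.2⟩
    exact hno c this hc0
  have hdiff : phiGen' α βm βp L n b - phiGen' α βm βp L n a
      = ∫ t in a..b, (betaHat α βm βp t)⁻¹ * (L n).eval t := by
    unfold phiGen'
    rw [← intervalIntegral.integral_interval_sub_left
      (intInt hβm hβp ((L n).continuous) (-1) b) (intInt hβm hβp ((L n).continuous) (-1) a)]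
  rcases hsign with hp | hneg
  · have : 0 < ∫ t in a..b, (betaHat α βm βp t)⁻¹ * (L n).eval t :=
      intervalIntegral_pos_of_pos_on (intInt hβm hβp ((L n).continuous) a b)
        (fun x hx => mul_pos (w_pos hβm hβp x) (hp x hx)) hab
    rw [← hdiff, h] at this; simp at this
  · have : 0 < ∫ t in a..b, (betaHat α βm βp t)⁻¹ * (-(L n).eval t) :=
      intervalIntegral_pos_of_pos_on (by simpa using (intInt hβm hβp ((L n).continuous.neg) a b))
        (fun x hx => mul_pos (w_pos hβm hβp x) (by linarith [hneg x hx])) hab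
    have h2 : (∫ t in a..b, (betaHat α βm βp t)⁻¹ * (-(L n).eval t))
        = - ∫ t in a..b, (betaHat α βm βp t)⁻¹ * (L n).eval t := by
      rw [← intervalIntegral.integral_neg]; congr 1; ext t; ring
    rw [h2, ← hdiff, h] at this; simp at this

end Aux2

section Aux3

variable {α βm βp : ℝ} (hβm : 0 < βm) (hβp : 0 < βp) (L : ℕ → Polynomial ℝ) (n : ℕ)

include hβm hβp in
lemma card_zeros_le (hL : L n ≠ 0) (T : Finset ℝ)
    (hT : ∀ x ∈ T, phiGen' α βm βp L n x = 0) : T.card ≤ (L n).natDegree + 1 := by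
  by_contra hcard
  push_neg at hcard
  set d := (L n).natDegree with hd
  obtain ⟨T', hT'sub, hT'card⟩ := Finset.exists_subset_card_eq (show d + 2 ≤ T.card by omega)
  let t : Fin (d + 2) → ℝ := fun i => (T'.orderIsoOfFin hT'card i : ℝ)
  have htmono : StrictMono t := by
    intro i j hij
    have h' := ((T'.orderIsoOfFin hT'card).lt_iff_lt (x := i) (y := j)).mpr hij
    exact h'
  have htmem : ∀ i, t i ∈ T' := fun i => (T'.orderIsoOfFin hT'card i).2
  have hroot : ∀ i : Fin (d + 1), ∃ c ∈ Set.Ioo (t i.castSucc) (t i.succ), (L n).eval c = 0 := by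
    intro i
    apply gap_root hβm hβp L n (htmono (Fin.castSucc_lt_succ (i := i)))
    rw [hT _ (hT'sub (htmem i.castSucc)), hT _ (hT'sub (htmem i.succ))]
  choose c hc hc0 using hroot
  have hcmono : StrictMono c := by
    intro i j hij
    calc c i < t i.succ := (hc i).2
    _ ≤ t j.castSucc := htmono.monotone (by rw [Fin.le_def]; rw [Fin.lt_def] at hij; simp only [Fin.coe_castSucc, Fin.val_succ]; omega)
    _ < c j := (hc j).1
  have himg : (Finset.univ.image c) ⊆ (L n).roots.toFinset := by
    intro x hx
    simp only [Finset.mem_image] at hx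
    obtain ⟨i, _, rfl⟩ := hx
    simp [Multiset.mem_toFinset, Polynomial.mem_roots', hL, hc0 i]
  have h1 : (Finset.univ.image c).card = d + 1 := by
    rw [Finset.card_image_of_injective _ hcmono.injective, Finset.card_univ, Fintype.card_fin]
  have h2 : (L n).roots.toFinset.card ≤ d := by
    exact le_trans (Multiset.toFinset_card_le _) (Polynomial.card_roots' _)
  have := Finset.card_le_card himg
  omega

include hβm hβp in
lemma zeros_finite (hL : L n ≠ 0) :
    {x : ℝ | phiGen' α βm βp L n x = 0}.Finite := by
  by_contra hinf
  have hinf' : {x : ℝ | phiGen' α βm βp L n x = 0}.Infinite := hinf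
  obtain ⟨T, hTsub, hTcard⟩ := hinf'.exists_subset_card_eq ((L n).natDegree + 2)
  have := card_zeros_le hβm hβp L n hL T (fun x hx => hTsub hx)
  omega

end Aux3

section Aux4

variable {α βm βp : ℝ} (hβm : 0 < βm) (hβp : 0 < βp) (L : ℕ → Polynomial ℝ) (n : ℕ)

include hβm hβp in
lemma phi_hasDerivAt {x : ℝ} (hx : x ≠ α) :
    HasDerivAt (phiGen' α βm βp L n) ((betaHat α βm βp x)⁻¹ * (L n).eval x) x := by
  apply intervalIntegral.integral_hasDerivAt_right
    (intInt hβm hβp ((L n).continuous) (-1) x)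
    (((w_meas.mul (L n).continuous.measurable).stronglyMeasurable).stronglyMeasurableAtFilter)
  -- continuity at x ≠ α
  rcases lt_or_gt_of_ne hx with h | h
  · apply ContinuousAt.congr ((continuousAt_const (y := βm⁻¹)).mul (L n).continuous.continuousAt)
    filter_upwards [Iio_mem_nhds h] with t ht
    have : t ≤ α := le_of_lt (Set.mem_Iio.mp ht)
    simp [betaHat, this]
  · apply ContinuousAt.congr ((continuousAt_const (y := βp⁻¹)).mul (L n).continuous.continuousAt)
    filter_upwards [Ioi_mem_nhds h] with t ht
    have : ¬ t ≤ α := not_le.mpr (Set.mem_Ioi.mp ht)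
    simp [betaHat, this]

include hβm hβp in
lemma parts (hα1 : -1 < α) (hα2 : α < 1)
    (hphi1 : phiGen' α βm βp L n 1 = 0) (Q : Polynomial ℝ) :
    (∫ x in (-1 : ℝ)..1, ((betaHat α βm βp x)⁻¹ * (L n).eval x * Q.eval x
      + phiGen' α βm βp L n x * (Polynomial.derivative Q).eval x)) = 0 := by
  set φ := phiGen' α βm βp L n with hφ
  set g : ℝ → ℝ := fun x => φ x * Q.eval x with hg
  set g' : ℝ → ℝ := fun x => (betaHat α βm βp x)⁻¹ * (L n).eval x * Q.eval x
      + φ x * (Polynomial.derivative Q).eval x with hg'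
  have hgcont : Continuous g := (phi_cont hβm hβp L n).mul Q.continuous
  have hg'int : ∀ a b : ℝ, IntervalIntegrable g' volume a b := by
    intro a b
    apply IntervalIntegrable.add
    · have := intInt (α := α) hβm hβp (g := fun x => (L n).eval x * Q.eval x)
        (((L n).continuous).mul Q.continuous) a b
      simpa [mul_assoc] using this
    · exact ((phi_cont hβm hβp L n).mul (Polynomial.derivative Q).continuous).intervalIntegrable a b
  have hderiv : ∀ x : ℝ, x ≠ α → HasDerivAt g (g' x) x := by
    intro x hx
    have h1 := (phi_hasDerivAt hβm hβp L n hx).mul (Q.hasDerivAt x)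
    convert h1 using 1 <;> rfl
  have part1 : ∫ x in (-1 : ℝ)..α, g' x = g α - g (-1) :=
    intervalIntegral.integral_eq_sub_of_hasDeriv_right_of_le (le_of_lt hα1)
      (hgcont.continuousOn)
      (fun x hx => ((hderiv x (ne_of_lt hx.2)).hasDerivWithinAt))
      (hg'int (-1) α)
  have part2 : ∫ x in α..(1:ℝ), g' x = g 1 - g α :=
    intervalIntegral.integral_eq_sub_of_hasDeriv_right_of_le (le_of_lt hα2)
      (hgcont.continuousOn)
      (fun x hx => ((hderiv x (ne_of_gt hx.1)).hasDerivWithinAt))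
      (hg'int α 1)
  have hsum := intervalIntegral.integral_add_adjacent_intervals (hg'int (-1) α) (hg'int α 1)
  rw [part1, part2] at hsum
  have hphim1 : φ (-1) = 0 := intervalIntegral.integral_same
  rw [← hsum]
  simp [hg, hphim1, hphi1]

end Aux4

noncomputable def antider (p : Polynomial ℝ) : Polynomial ℝ :=
  p.sum fun k a => Polynomial.C (a / (k+1)) * Polynomial.X ^ (k+1)

lemma derivative_antider (p : Polynomial ℝ) : Polynomial.derivative (antider p) = p := by
  unfold antider
  rw [Polynomial.sum_def, map_sum]
  have : ∀ k ∈ p.support,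
      Polynomial.derivative (Polynomial.C (p.coeff k / (k+1)) * Polynomial.X ^ (k+1))
      = Polynomial.C (p.coeff k) * Polynomial.X ^ k := by
    intro k _
    rw [Polynomial.derivative_C_mul_X_pow]
    simp only [Nat.add_sub_cancel]
    congr 1
    have hk : ((k:ℝ) + 1) ≠ 0 := by positivity
    push_cast
    field_simp
  rw [Finset.sum_congr rfl this]
  calc ∑ x ∈ p.support, Polynomial.C (p.coeff x) * Polynomial.X ^ x
      = ∑ x ∈ p.support, Polynomial.monomial x (p.coeff x) := by
        simp [Polynomial.C_mul_X_pow_eq_monomial]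
    _ = p := p.as_sum_support.symm

lemma natDegree_antider (p : Polynomial ℝ) : (antider p).natDegree ≤ p.natDegree + 1 := by
  unfold antider
  rw [Polynomial.sum_def]
  apply Polynomial.natDegree_sum_le_of_forall_le
  intro k hk
  calc (Polynomial.C (p.coeff k / (k+1)) * Polynomial.X ^ (k+1)).natDegree
      ≤ (Polynomial.X ^ (k+1) : Polynomial ℝ).natDegree := Polynomial.natDegree_C_mul_le _ _
    _ = k + 1 := Polynomial.natDegree_X_pow _
    _ ≤ p.natDegree + 1 := by
        have := Polynomial.le_natDegree_of_mem_supp k hk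
        omega

section Aux5

variable {α βm βp : ℝ} (hβm : 0 < βm) (hβp : 0 < βp) (L : ℕ → Polynomial ℝ) (n : ℕ)
  (hmonic : ∀ k, (L k).Monic) (hdeg : ∀ k, (L k).natDegree = k)
  (horth : ∀ j k, j ≠ k →
      ∫ x in (-1 : ℝ)..1, (betaHat α βm βp x)⁻¹ * (L j).eval x * (L k).eval x = 0)

include hβm hβp hmonic hdeg horth in
lemma orth_low (hn : 1 ≤ n) :
    ∀ d, d + 1 ≤ n → ∀ p : Polynomial ℝ, p.natDegree ≤ d →
      ∫ x in (-1:ℝ)..1, (betaHat α βm βp x)⁻¹ * (L n).eval x * p.eval x = 0 := by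
  intro d
  induction d with
  | zero =>
    intro hdn p hp
    obtain ⟨c, rfl⟩ := Polynomial.natDegree_eq_zero.mp (le_antisymm hp (zero_le))
    have hL0 : L 0 = 1 := by
      have h1 := hmonic 0
      have h2 := hdeg 0
      exact (Polynomial.Monic.natDegree_eq_zero h1).mp h2
    have key := horth n 0 (by omega)
    rw [hL0] at key
    simp only [Polynomial.eval_one, mul_one] at key
    calc (∫ x in (-1:ℝ)..1, (betaHat α βm βp x)⁻¹ * (L n).eval x * (Polynomial.C c).eval x)
        = ∫ x in (-1:ℝ)..1, c * ((betaHat α βm βp x)⁻¹ * (L n).eval x) := by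
          congr 1; ext x; simp; ring
      _ = c * ∫ x in (-1:ℝ)..1, (betaHat α βm βp x)⁻¹ * (L n).eval x :=
          intervalIntegral.integral_const_mul _ _
      _ = 0 := by rw [key, mul_zero]
  | succ d ih =>
    intro hdn p hp
    set c := p.coeff (d+1) with hc
    have hrdeg : (p - Polynomial.C c * L (d+1)).natDegree ≤ d := by
      rw [Polynomial.natDegree_le_iff_coeff_eq_zero]
      intro N hN
      rw [Polynomial.coeff_sub, Polynomial.coeff_C_mul]
      rcases eq_or_lt_of_le (Nat.succ_le_of_lt hN) with h | h
      · have hNe : N = d + 1 := h.symm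
        subst hNe
        have hone : (L (d+1)).coeff (d+1) = 1 := by
          have h2 := (hmonic (d+1)).coeff_natDegree
          rwa [hdeg (d+1)] at h2
        rw [hone, mul_one, hc, sub_self]
      · rw [Polynomial.coeff_eq_zero_of_natDegree_lt (lt_of_le_of_lt hp h),
            Polynomial.coeff_eq_zero_of_natDegree_lt (by rw [hdeg]; exact h)]
        simp
    have hpeq : p = (p - Polynomial.C c * L (d+1)) + Polynomial.C c * L (d+1) := by ring
    set r := p - Polynomial.C c * L (d+1) with hrdef
    have hIr := ih (by omega) r hrdeg
    have hIL := horth n (d+1) (by omega)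
    have hint1 : IntervalIntegrable
        (fun x => (betaHat α βm βp x)⁻¹ * (L n).eval x * r.eval x) volume (-1) 1 := by
      simpa [mul_assoc] using intInt (α := α) hβm hβp
        (g := fun x => (L n).eval x * r.eval x)
        (((L n).continuous).mul r.continuous) (-1) 1
    have hint2 : IntervalIntegrable
        (fun x => c * ((betaHat α βm βp x)⁻¹ * (L n).eval x * (L (d+1)).eval x)) volume (-1) 1 := by
      apply IntervalIntegrable.const_mul
      simpa [mul_assoc] using intInt (α := α) hβm hβp
        (g := fun x => (L n).eval x * (L (d+1)).eval x)
        (((L n).continuous).mul (L (d+1)).continuous) (-1) 1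
    calc ∫ x in (-1:ℝ)..1, (betaHat α βm βp x)⁻¹ * (L n).eval x * p.eval x
        = ∫ x in (-1:ℝ)..1, ((betaHat α βm βp x)⁻¹ * (L n).eval x * r.eval x
            + c * ((betaHat α βm βp x)⁻¹ * (L n).eval x * (L (d+1)).eval x)) := by
          congr 1; ext x
          conv_lhs => rw [hpeq]
          simp only [Polynomial.eval_add, Polynomial.eval_mul, Polynomial.eval_C]
          ring
      _ = (∫ x in (-1:ℝ)..1, (betaHat α βm βp x)⁻¹ * (L n).eval x * r.eval x)
            + ∫ x in (-1:ℝ)..1, c * ((betaHat α βm βp x)⁻¹ * (L n).eval x * (L (d+1)).eval x) :=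
          intervalIntegral.integral_add hint1 hint2
      _ = 0 := by
          rw [hIr, intervalIntegral.integral_const_mul, hIL]; ring

include hβm hβp hmonic hdeg horth in
lemma phi_orth (hα1 : -1 < α) (hα2 : α < 1) (hn : 1 ≤ n)
    (hphi1 : phiGen' α βm βp L n 1 = 0) (p : Polynomial ℝ) (hp : p.natDegree + 2 ≤ n) :
    ∫ x in (-1:ℝ)..1, phiGen' α βm βp L n x * p.eval x = 0 := by
  have hparts := parts hβm hβp L n hα1 hα2 hphi1 (antider p)
  rw [derivative_antider] at hparts
  have hint1 : IntervalIntegrable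
      (fun x => (betaHat α βm βp x)⁻¹ * (L n).eval x * (antider p).eval x) volume (-1) 1 := by
    simpa [mul_assoc] using intInt (α := α) hβm hβp
      (g := fun x => (L n).eval x * (antider p).eval x)
      (((L n).continuous).mul (antider p).continuous) (-1) 1
  have hint2 : IntervalIntegrable
      (fun x => phiGen' α βm βp L n x * p.eval x) volume (-1) 1 :=
    ((phi_cont hβm hβp L n).mul p.continuous).intervalIntegrable (-1) 1
  rw [intervalIntegral.integral_add hint1 hint2] at hparts
  have hzero : ∫ x in (-1:ℝ)..1, (betaHat α βm βp x)⁻¹ * (L n).eval x * (antider p).eval x = 0 :=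
    orth_low hβm hβp L n hmonic hdeg horth hn (p.natDegree + 1) (by omega)
      (antider p) (natDegree_antider p)
  rw [hzero] at hparts
  linarith

end Aux5

lemma prod_neg_card (s : Finset ℕ) (f : ℕ → ℝ) :
    ∏ i ∈ s, -f i = (-1)^s.card * ∏ i ∈ s, f i := by
  rw [← Finset.prod_const, ← Finset.prod_mul_distrib]
  simp

lemma same_sign {f : ℝ → ℝ} (hf : Continuous f) {a b : ℝ}
    (hne : ∀ x ∈ Set.Ioo a b, f x ≠ 0) {x y : ℝ} (hx : x ∈ Set.Ioo a b)
    (hy : y ∈ Set.Ioo a b) (hxpos : 0 < f x) : 0 < f y := by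
  by_contra h
  have hyneg : f y < 0 := lt_of_le_of_ne (not_lt.mp h) (hne y hy)
  have h0 : (0:ℝ) ∈ Set.uIcc (f x) (f y) := Set.mem_uIcc.mpr (Or.inr ⟨hyneg.le, hxpos.le⟩)
  obtain ⟨c, hc, hc0⟩ := intermediate_value_uIcc (hf.continuousOn) h0
  have hcIoo : c ∈ Set.Ioo a b := by
    rcases Set.mem_uIcc.mp hc with ⟨h1, h2⟩ | ⟨h1, h2⟩
    · exact ⟨lt_of_lt_of_le hx.1 h1, lt_of_le_of_lt h2 hy.2⟩
    · exact ⟨lt_of_lt_of_le hy.1 h1, lt_of_le_of_lt h2 hx.2⟩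
  exact hne c hcIoo hc0

section Aux6

variable {α βm βp : ℝ} (hβm : 0 < βm) (hβp : 0 < βp) (L : ℕ → Polynomial ℝ) (n : ℕ)
  (hmonic : ∀ k, (L k).Monic) (hdeg : ∀ k, (L k).natDegree = k)
  (horth : ∀ j k, j ≠ k →
      ∫ x in (-1 : ℝ)..1, (betaHat α βm βp x)⁻¹ * (L j).eval x * (L k).eval x = 0)

include hmonic hdeg horth in
lemma phi_one (hn : 1 ≤ n) : phiGen' α βm βp L n 1 = 0 := by
  have hL0 : L 0 = 1 := by
    have h1 := hmonic 0
    have h2 := hdeg 0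
    exact (Polynomial.Monic.natDegree_eq_zero h1).mp h2
  have key := horth 0 n (by omega)
  rw [hL0] at key
  unfold phiGen'
  rw [← key]
  congr 1; ext x; simp

end Aux6

/-- `φ_{n+1}` changes sign exactly `n-1` times in `(-1,1)`: there are `n-1` interior
crossing points partitioning `(-1,1)` into `n` subintervals on which `φ_{n+1}` is
strictly of one sign, with alternating signs. -/
theorem generalized_lobatto_sign_changes
    (α βm βp : ℝ) (hα : α ∈ Set.Ioo (-1 : ℝ) 1) (hβm : 0 < βm) (hβp : 0 < βp)
    (L : ℕ → Polynomial ℝ) (hmonic : ∀ k, (L k).Monic) (hdeg : ∀ k, (L k).natDegree = k)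
    (horth : ∀ j k, j ≠ k →
      ∫ x in (-1 : ℝ)..1, (betaHat α βm βp x)⁻¹ * (L j).eval x * (L k).eval x = 0)
    (n : ℕ) (hn : 1 ≤ n) :
    ∃ z : Fin (n + 1) → ℝ, StrictMono z ∧ z 0 = -1 ∧ z (Fin.last n) = 1 ∧
      ∃ σ : ℝ, (σ = 1 ∨ σ = -1) ∧
        ∀ i : Fin n, ∀ x ∈ Set.Ioo (z i.castSucc) (z i.succ),
          0 < σ * (-1 : ℝ) ^ (i : ℕ) * phiGen' α βm βp L n x := by
  obtain ⟨hα1, hα2⟩ := hα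
  have hφcont : Continuous (phiGen' α βm βp L n) := phi_cont hβm hβp L n
  set φ := phiGen' α βm βp L n with hφdef
  have hφ1 : φ 1 = 0 := phi_one L n hmonic hdeg horth hn
  have hφm1 : φ (-1) = 0 := intervalIntegral.integral_same
  have hLne : L n ≠ 0 := (hmonic n).ne_zero
  -- the zero set of φ in [-1,1]
  have hZfin : ({x : ℝ | φ x = 0} ∩ Set.Icc (-1:ℝ) 1).Finite :=
    (zeros_finite hβm hβp L n hLne).inter_of_left _
  set F := hZfin.toFinset with hF
  have hmemF : ∀ x, x ∈ F ↔ (φ x = 0 ∧ x ∈ Set.Icc (-1:ℝ) 1) := by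
    intro x; simp [hF, Set.Finite.mem_toFinset]
  have hm1F : (-1:ℝ) ∈ F := (hmemF _).mpr ⟨hφm1, by norm_num⟩
  have h1F : (1:ℝ) ∈ F := (hmemF _).mpr ⟨hφ1, by norm_num⟩
  have hcard2 : 2 ≤ F.card := by
    have : ({-1, 1} : Finset ℝ) ⊆ F := by
      intro x hx
      rcases Finset.mem_insert.mp hx with h | h
      · rw [h]; exact hm1F
      · rw [Finset.mem_singleton.mp h]; exact h1F
    calc 2 = ({-1, 1} : Finset ℝ).card := by norm_num
      _ ≤ F.card := Finset.card_le_card this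
  set m := F.card - 1 with hm
  have hFcard : F.card = m + 1 := by omega
  have hm1 : 1 ≤ m := by omega
  have hmn : m ≤ n := by
    have hcl := card_zeros_le hβm hβp L n hLne F (fun x hx => ((hmemF x).mp hx).1)
    rw [hdeg n] at hcl; omega
  -- the sorted zeros
  set ζ : Fin (m+1) → ℝ := fun i => (F.orderIsoOfFin hFcard i : ℝ) with hζ
  have hζmono : StrictMono ζ := by
    intro i j hij
    have h' := ((F.orderIsoOfFin hFcard).lt_iff_lt (x := i) (y := j)).mpr hij
    exact h'
  have hζmem : ∀ i, ζ i ∈ F := fun i => (F.orderIsoOfFin hFcard i).2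
  have hζzero : ∀ i, φ (ζ i) = 0 := fun i => ((hmemF _).mp (hζmem i)).1
  have hζIcc : ∀ i, ζ i ∈ Set.Icc (-1:ℝ) 1 := fun i => ((hmemF _).mp (hζmem i)).2
  have hζ0 : ζ 0 = -1 := by
    obtain ⟨k, hk⟩ := (F.orderIsoOfFin hFcard).surjective ⟨-1, hm1F⟩
    have hk' : ζ k = -1 := congrArg Subtype.val hk
    have h1 : ζ 0 ≤ ζ k := hζmono.monotone (Fin.zero_le _)
    have h2 : -1 ≤ ζ 0 := (hζIcc 0).1
    rw [hk'] at h1; linarith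
  have hζlast : ζ (Fin.last m) = 1 := by
    obtain ⟨k, hk⟩ := (F.orderIsoOfFin hFcard).surjective ⟨1, h1F⟩
    have hk' : ζ k = 1 := congrArg Subtype.val hk
    have h1 : ζ k ≤ ζ (Fin.last m) := hζmono.monotone (Fin.le_last _)
    have h2 : ζ (Fin.last m) ≤ 1 := (hζIcc _).2
    rw [hk'] at h1; linarith
  -- ℕ-indexed versions
  set ζ' : ℕ → ℝ := fun k => ζ ⟨min k m, by omega⟩ with hζ'
  have hζ'eq : ∀ k (h : k ≤ m), ζ' k = ζ ⟨k, by omega⟩ := by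
    intro k h
    simp only [hζ']
    congr 1
    exact Fin.ext (by simp [min_eq_left h])
  have hζ'lt : ∀ k, k < m → ζ' k < ζ' (k+1) := by
    intro k hk
    rw [hζ'eq k (by omega), hζ'eq (k+1) (by omega)]
    exact hζmono (by simp [Fin.lt_def])
  have hζ'mono : ∀ k l, k < l → l ≤ m → ζ' k < ζ' l := by
    intro k l hkl hl
    rw [hζ'eq k (by omega), hζ'eq l hl]
    exact hζmono (by simp [Fin.lt_def]; omega)
  have hζ'0 : ζ' 0 = -1 := by rw [hζ'eq 0 (by omega)]; exact hζ0
  have hζ'm : ζ' m = 1 := by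
    rw [hζ'eq m le_rfl]
    have : (⟨m, by omega⟩ : Fin (m+1)) = Fin.last m := rfl
    rw [this]; exact hζlast
  -- no zeros in the open gaps
  have hgapne : ∀ k, k < m → ∀ x ∈ Set.Ioo (ζ' k) (ζ' (k+1)), φ x ≠ 0 := by
    intro k hk x hx hx0
    have hxm1 : -1 ≤ x := by
      have : ζ' 0 ≤ ζ' k := by
        rcases Nat.eq_zero_or_pos k with h | h
        · rw [h]
        · exact (hζ'mono 0 k h (by omega)).le
      rw [hζ'0] at this; linarith [hx.1]
    have hx1 : x ≤ 1 := by
      have : ζ' (k+1) ≤ ζ' m := by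
        rcases eq_or_lt_of_le (Nat.succ_le_of_lt hk) with h | h
        · rw [show k + 1 = m from h]
        · exact (hζ'mono (k+1) m h le_rfl).le
      rw [hζ'm] at this; linarith [hx.2]
    have hxF : x ∈ F := (hmemF _).mpr ⟨hx0, ⟨hxm1, hx1⟩⟩
    obtain ⟨j, hj⟩ := (F.orderIsoOfFin hFcard).surjective ⟨x, hxF⟩
    have hj' : ζ j = x := congrArg Subtype.val hj
    have hlt1 : (⟨k, by omega⟩ : Fin (m+1)) < j := by
      apply hζmono.lt_iff_lt.mp
      rw [hj', ← hζ'eq k (by omega)]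
      exact hx.1
    have hlt2 : j < (⟨k+1, by omega⟩ : Fin (m+1)) := by
      apply hζmono.lt_iff_lt.mp
      rw [hj', ← hζ'eq (k+1) (by omega)]
      exact hx.2
    rw [Fin.lt_def] at hlt1 hlt2
    simp at hlt1 hlt2
    omega
  -- the sign on each gap
  have hsigns : ∀ k, k < m → ∃ ε : ℝ, (ε = 1 ∨ ε = -1) ∧
      ∀ x ∈ Set.Ioo (ζ' k) (ζ' (k+1)), 0 < ε * φ x := by
    intro k hk
    obtain ⟨x₀, hx₀⟩ := Set.nonempty_Ioo.mpr (hζ'lt k hk)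
    rcases lt_or_gt_of_ne (hgapne k hk x₀ hx₀) with hneg | hpos
    · refine ⟨-1, Or.inr rfl, fun x hx => ?_⟩
      have : 0 < -φ x := by
        apply same_sign (f := fun y => -φ y) hφcont.neg
          (fun y hy h0 => hgapne k hk y hy (by simpa using (neg_eq_zero.mp h0))) hx₀ hx
        simpa using hneg
      linarith
    · refine ⟨1, Or.inl rfl, fun x hx => ?_⟩
      have : 0 < φ x := same_sign hφcont (hgapne k hk) hx₀ hx hpos
      linarith
  have hsigns' : ∀ k, ∃ ε : ℝ, (ε = 1 ∨ ε = -1) ∧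
      (k < m → ∀ x ∈ Set.Ioo (ζ' k) (ζ' (k+1)), 0 < ε * φ x) := by
    intro k
    by_cases hk : k < m
    · obtain ⟨ε, h1, h2⟩ := hsigns k hk
      exact ⟨ε, h1, fun _ => h2⟩
    · exact ⟨1, Or.inl rfl, fun h => absurd h hk⟩
  choose ε hεpm hεpos using hsigns'
  classical
  set T : Finset ℕ := (Finset.range m).filter (fun j => j ≠ 0 ∧ ε (j-1) ≠ ε j) with hT
  set p : Polynomial ℝ := ∏ j ∈ T, (Polynomial.X - Polynomial.C (ζ' j)) with hp
  have hpdeg : p.natDegree = T.card := by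
    rw [hp, Polynomial.natDegree_prod_of_monic _ _ (fun j _ => Polynomial.monic_X_sub_C _)]
    simp [Polynomial.natDegree_X_sub_C]
  have hpeval : ∀ x : ℝ, p.eval x = ∏ j ∈ T, (x - ζ' j) := by
    intro x; simp [hp, Polynomial.eval_prod]
  set c : ℕ → ℕ := fun k => (T.filter (fun j => k < j)).card with hc
  have hcstep : ∀ k, c k = c (k+1) + (if (k+1) ∈ T then 1 else 0) := by
    intro k
    simp only [hc]
    have hfil : T.filter (fun j => k < j)
        = (T.filter (fun j => k+1 < j)) ∪ (T.filter (fun j => j = k+1)) := by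
      ext j
      simp only [Finset.mem_filter, Finset.mem_union]
      constructor
      · rintro ⟨hj, hlt⟩
        rcases eq_or_lt_of_le (Nat.succ_le_of_lt hlt) with h | h
        · exact Or.inr ⟨hj, h.symm⟩
        · exact Or.inl ⟨hj, h⟩
      · rintro (⟨hj, h⟩ | ⟨hj, h⟩)
        · exact ⟨hj, by omega⟩
        · exact ⟨hj, by omega⟩
    rw [hfil, Finset.card_union_of_disjoint]
    · congr 1
      rw [Finset.filter_eq']
      split <;> simp
    · rw [Finset.disjoint_left]
      intro j hj1 hj2
      have h1 := (Finset.mem_filter.mp hj1).2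
      have h2 := (Finset.mem_filter.mp hj2).2
      omega
  have hεstep : ∀ k, k + 1 < m → ε (k+1) * (-1:ℝ)^(c (k+1)) = ε k * (-1)^(c k) := by
    intro k hk
    by_cases hkT : (k+1) ∈ T
    · have hne : ε k ≠ ε (k+1) := by
        have h2 := (Finset.mem_filter.mp (hT ▸ hkT)).2.2
        simpa using h2
      have hflip : ε (k+1) = -ε k := by
        rcases hεpm k with h1 | h1 <;> rcases hεpm (k+1) with h2 | h2 <;>
          simp [h1, h2] at hne ⊢
      rw [hcstep k, if_pos hkT, hflip, pow_add]
      ring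
    · have heq : ε (k+1) = ε k := by
        by_contra hne
        apply hkT
        rw [hT]
        refine Finset.mem_filter.mpr ⟨Finset.mem_range.mpr hk, by omega, ?_⟩
        simpa using (Ne.symm hne)
      rw [hcstep k, if_neg hkT, heq, add_zero]
  have hsgn : ∀ k, k < m → ε k * (-1:ℝ)^(c k) = ε 0 * (-1)^(c 0) := by
    intro k
    induction k with
    | zero => intro _; rfl
    | succ k ih =>
      intro h
      rw [hεstep k h]
      exact ih (by omega)
  have hppos : ∀ k, k < m → ∀ x ∈ Set.Ioo (ζ' k) (ζ' (k+1)),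
      0 < (ε 0 * (-1:ℝ)^(c 0)) * (φ x * p.eval x) := by
    intro k hk x hx
    have h1 : 0 < ε k * φ x := hεpos k hk x hx
    have h2 : 0 < (-1:ℝ)^(c k) * p.eval x := by
      rw [hpeval, ← Finset.prod_filter_mul_prod_filter_not T (fun j => k < j), hc]
      have h3 : (-1:ℝ)^(T.filter (fun j => k < j)).card
          * ∏ j ∈ T.filter (fun j => k < j), (x - ζ' j)
          = ∏ j ∈ T.filter (fun j => k < j), (ζ' j - x) := by
        rw [← prod_neg_card]
        exact Finset.prod_congr rfl (fun j _ => by ring)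
      have hA : 0 < ∏ j ∈ T.filter (fun j => k < j), (ζ' j - x) := by
        apply Finset.prod_pos
        intro j hj
        have hjT := Finset.mem_filter.mp hj
        have hjm : j < m := Finset.mem_range.mp (Finset.mem_filter.mp (hT ▸ hjT.1)).1
        have hklt : k < j := hjT.2
        have : ζ' (k+1) ≤ ζ' j := by
          rcases eq_or_lt_of_le (Nat.succ_le_of_lt hklt) with h | h
          · rw [show k + 1 = j from h]
          · exact (hζ'mono (k+1) j h (by omega)).le
        have := hx.2
        linarith
      have hB : 0 < ∏ j ∈ T.filter (fun j => ¬ k < j), (x - ζ' j) := by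
        apply Finset.prod_pos
        intro j hj
        have hjT := Finset.mem_filter.mp hj
        have hjk : j ≤ k := by omega
        have : ζ' j ≤ ζ' k := by
          rcases eq_or_lt_of_le hjk with h | h
          · rw [h]
          · exact (hζ'mono j k h (by omega)).le
        have := hx.1
        linarith
      calc (0:ℝ) < (∏ j ∈ T.filter (fun j => k < j), (ζ' j - x))
            * ∏ j ∈ T.filter (fun j => ¬ k < j), (x - ζ' j) := mul_pos hA hB
        _ = (-1:ℝ)^(T.filter (fun j => k < j)).card
            * ((∏ j ∈ T.filter (fun j => k < j), (x - ζ' j))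
              * ∏ j ∈ T.filter (fun j => ¬ k < j), (x - ζ' j)) := by
            rw [← h3]; ring
    calc (0:ℝ) < (ε k * φ x) * ((-1:ℝ)^(c k) * p.eval x) := mul_pos h1 h2
      _ = (ε k * (-1:ℝ)^(c k)) * (φ x * p.eval x) := by ring
      _ = (ε 0 * (-1:ℝ)^(c 0)) * (φ x * p.eval x) := by rw [hsgn k hk]
  have hgint : ∀ a b : ℝ, IntervalIntegrable
      (fun x => (ε 0 * (-1:ℝ)^(c 0)) * (φ x * p.eval x)) volume a b := by
    intro a b
    exact (continuous_const.mul (hφcont.mul p.continuous)).intervalIntegrable a b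
  have hIpos : 0 < ∫ x in (-1:ℝ)..1, (ε 0 * (-1:ℝ)^(c 0)) * (φ x * p.eval x) := by
    have hsum := intervalIntegral.sum_integral_adjacent_intervals
      (a := ζ') (n := m) (μ := volume)
      (f := fun x => (ε 0 * (-1:ℝ)^(c 0)) * (φ x * p.eval x)) (fun k _ => hgint _ _)
    rw [hζ'0, hζ'm] at hsum
    rw [← hsum]
    apply Finset.sum_pos
    · intro k hk
      have hkm := Finset.mem_range.mp hk
      exact intervalIntegral_pos_of_pos_on (hgint _ _) (hppos k hkm) (hζ'lt k hkm)
    · exact ⟨0, Finset.mem_range.mpr (by omega)⟩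
  have hIne : (∫ x in (-1:ℝ)..1, φ x * p.eval x) ≠ 0 := by
    intro h0
    rw [intervalIntegral.integral_const_mul, h0, mul_zero] at hIpos
    exact lt_irrefl _ hIpos
  have hTcard : n ≤ T.card + 1 := by
    by_contra hcon
    push_neg at hcon
    exact hIne (phi_orth hβm hβp L n hmonic hdeg horth hα1 hα2 hn hφ1 p
      (by rw [hpdeg]; omega))
  have hTsub : T ⊆ (Finset.range m).erase 0 := by
    intro j hj
    have hj' := Finset.mem_filter.mp (hT ▸ hj)
    exact Finset.mem_erase.mpr ⟨hj'.2.1, hj'.1⟩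
  have herasecard : ((Finset.range m).erase 0).card = m - 1 := by
    rw [Finset.card_erase_of_mem (Finset.mem_range.mpr (by omega)), Finset.card_range]
  have hTcard' : T.card ≤ m - 1 := by
    have := Finset.card_le_card hTsub
    omega
  have hmeq : m = n := by omega
  have hTeq : T = (Finset.range m).erase 0 :=
    Finset.eq_of_subset_of_card_le hTsub (by omega)
  have halt : ∀ k, k < m → ε k = ε 0 * (-1:ℝ)^k := by
    intro k
    induction k with
    | zero => intro _; simp
    | succ k ih =>
      intro h
      have hkT : (k+1) ∈ T := by
        rw [hTeq]
        exact Finset.mem_erase.mpr ⟨by omega, Finset.mem_range.mpr h⟩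
      have hne : ε k ≠ ε (k+1) := by
        have h2 := (Finset.mem_filter.mp (hT ▸ hkT)).2.2
        simpa using h2
      have hflip : ε (k+1) = -ε k := by
        rcases hεpm k with h1 | h1 <;> rcases hεpm (k+1) with h2 | h2 <;>
          simp [h1, h2] at hne ⊢
      rw [hflip, ih (by omega), pow_succ]
      ring
  refine ⟨fun i => ζ' i, ?_, ?_, ?_, ε 0, hεpm 0, ?_⟩
  · intro i j hij
    exact hζ'mono i j (by exact_mod_cast hij) (by omega)
  · show ζ' ((0 : Fin (n+1)) : ℕ) = -1
    simpa using hζ'0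
  · show ζ' ((Fin.last n : Fin (n+1)) : ℕ) = 1
    simp only [Fin.val_last]
    rw [← hmeq]
    exact hζ'm
  · intro i x hx
    have hi : (i : ℕ) < m := by omega
    have hx' : x ∈ Set.Ioo (ζ' i) (ζ' (i+1)) := by
      simpa [Fin.coe_castSucc, Fin.val_succ] using hx
    have hpos := hεpos i hi x hx'
    rw [halt i hi] at hpos
    exact hpos
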